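/- Let u, v, t be points in the plane and i ∈ ℤ/6. Suppose u and v both lie in the region of C_t^i ∪ C_t^{i+1} between the bisectors B_t^i and B_t^{i+1}, and v ∈ C_u^{i+3} ∪ C_u^{i+4}. Then ‖uv‖_hex ≤ 2(‖ut‖_thex − ‖vt‖_thex). -/

import Mathlib

open Real

/-- Hexagonal norm: unit disk is the regular hexagon with east/west vertices (±1,0). -/
noncomputable def hexNorm (p : ℝ × ℝ) : ℝ :=
  max (2 * |p.2| / Real.sqrt 3) (max |p.1 + p.2 / Real.sqrt 3| |p.1 - p.2 / Real.sqrt 3|)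

/-- Tipped hexagonal norm: unit disk is the regular hexagon with north/south vertices (0, ±2/√3). -/
noncomputable def thexNorm (p : ℝ × ℝ) : ℝ :=
  max |p.1| (max (|p.1 + Real.sqrt 3 * p.2| / 2) (|p.1 - Real.sqrt 3 * p.2| / 2))

/-- Euclidean norm of a planar vector. -/
noncomputable def eucNorm (p : ℝ × ℝ) : ℝ := Real.sqrt (p.1 ^ 2 + p.2 ^ 2)

/-- Rotation of a planar vector by angle θ (counterclockwise). -/
noncomputable def rot (θ : ℝ) (p : ℝ × ℝ) : ℝ × ℝ :=
  (Real.cos θ * p.1 - Real.sin θ * p.2, Real.sin θ * p.1 + Real.cos θ * p.2)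

/-- The cone of directions pointing straight down (spanning 60°), bounded by
lines of slopes √3 and -√3 through the origin. -/
def cone0 : Set (ℝ × ℝ) := {v | v.2 ≤ 0 ∧ Real.sqrt 3 * |v.1| ≤ -v.2}

/-- Coordinates of q in the frame of the i-th cone of p (cone rotated back to cone0). -/
noncomputable def localCoord (p : ℝ × ℝ) (i : ZMod 6) (q : ℝ × ℝ) : ℝ × ℝ :=
  rot (-((i.val : ℝ) * (Real.pi / 3))) (q - p)

/-- The closed cone `C_p^i`: the six cones about p determined by the lines of
slopes -√3, 0, √3 through p, labeled counterclockwise with `C_p^0` directly below p. -/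
def cone (p : ℝ × ℝ) (i : ZMod 6) : Set (ℝ × ℝ) :=
  {q | localCoord p i q ∈ cone0}

/-- The triangle `∇_u^v`: points of the cone of u containing v whose hex-distance
to u is at most that of v. -/
def nabla (u v : ℝ × ℝ) : Set (ℝ × ℝ) :=
  {r | hexNorm (r - u) ≤ hexNorm (v - u) ∧ ∀ i : ZMod 6, v ∈ cone u i → r ∈ cone u i}

/-- Side length of an equilateral triangle with sides of slopes -√3, 0, √3,
realized as its diameter in the hexagonal norm. -/
noncomputable def sideLen (T : Set (ℝ × ℝ)) : ℝ :=
  sSup ((fun pq : (ℝ × ℝ) × (ℝ × ℝ) => hexNorm (pq.1 - pq.2)) '' (T ×ˢ T))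

/-- General position: no two points lie on a common line of slope -√3, 0 or √3. -/
def genPos (P : Finset (ℝ × ℝ)) : Prop :=
  ∀ p ∈ P, ∀ q ∈ P, p ≠ q →
    p.2 ≠ q.2 ∧ p.2 - q.2 ≠ Real.sqrt 3 * (p.1 - q.1) ∧
      p.2 - q.2 ≠ -(Real.sqrt 3) * (p.1 - q.1)

/-- Edge of the directed Theta-6 graph of P: from u to v exactly when the interior
of `∇_u^v` contains no point of P. -/
def isEdge (P : Finset (ℝ × ℝ)) (u v : ℝ × ℝ) : Prop :=
  u ∈ P ∧ v ∈ P ∧ u ≠ v ∧ ∀ p ∈ P, p ∉ interior (nabla u v)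

/-- A directed path in the Theta-6 graph of P from s to t, given as its list of vertices. -/
def isPath (P : Finset (ℝ × ℝ)) (ℓ : List (ℝ × ℝ)) (s t : ℝ × ℝ) : Prop :=
  ℓ ≠ [] ∧ ℓ.head? = some s ∧ ℓ.getLast? = some t ∧ ℓ.Chain' (isEdge P)

/-- Euclidean length of a path. -/
noncomputable def pathLen (ℓ : List (ℝ × ℝ)) : ℝ :=
  ((ℓ.zip ℓ.tail).map (fun pq => eucNorm (pq.2 - pq.1))).sum

/-- The region of `C_t^i ∪ C_t^{i+1}` between the bisectors `B_t^i` and `B_t^{i+1}`: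
points of `C_t^i` on the counterclockwise side of `B_t^i` together with points of
`C_t^{i+1}` on the clockwise side of `B_t^{i+1}`. -/
noncomputable def betweenBisectors (t : ℝ × ℝ) (i : ZMod 6) : Set (ℝ × ℝ) :=
  {w | (w ∈ cone t i ∧ 0 ≤ (localCoord t i w).1) ∨
       (w ∈ cone t (i + 1) ∧ (localCoord t (i + 1) w).1 ≤ 0)}


section AuxStmt2

private lemma hs3 : Real.sqrt 3 * Real.sqrt 3 = 3 := Real.mul_self_sqrt (by norm_num)
private lemma hp3 : (0:ℝ) < Real.sqrt 3 := Real.sqrt_pos.2 (by norm_num)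

private lemma rot_add' (a b : ℝ) (p : ℝ × ℝ) : rot (a + b) p = rot a (rot b p) := by
  simp only [rot, Real.cos_add, Real.sin_add, Prod.mk.injEq]
  constructor <;> ring

private lemma rot_zero' (p : ℝ × ℝ) : rot 0 p = p := by
  simp [rot]

private lemma rot_int (k : ℤ) (θ : ℝ) (p : ℝ × ℝ) : rot (θ + k * (2*π)) p = rot θ p := by
  simp only [rot, Real.cos_add_int_mul_two_pi, Real.sin_add_int_mul_two_pi]

private lemma rot_sub' (θ : ℝ) (p q : ℝ × ℝ) : rot θ (p - q) = rot θ p - rot θ q := by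
  simp only [rot, Prod.fst_sub, Prod.snd_sub, Prod.mk_sub_mk, Prod.mk.injEq]
  constructor <;> ring

private lemma rot_neg' (θ : ℝ) (p : ℝ × ℝ) : rot θ (-p) = - rot θ p := by
  simp only [rot, Prod.fst_neg, Prod.snd_neg, Prod.neg_mk, Prod.mk.injEq]
  constructor <;> ring

private lemma localCoord_eq (p q : ℝ × ℝ) (i : ZMod 6) (n : ℕ) (h : (n : ZMod 6) = i) :
    localCoord p i q = rot (-((n:ℝ) * (π/3))) (q - p) := by
  unfold localCoord
  have hv : i.val = n % 6 := by rw [← h, ZMod.val_natCast]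
  have hnm : (n:ℝ) = 6*((n/6 : ℕ) : ℝ) + ((n % 6 : ℕ) : ℝ) := by
    exact_mod_cast (Nat.div_add_mod n 6).symm
  have hd : -((n:ℝ) * (π/3)) = -((i.val:ℝ) * (π/3)) + ((-((n/6 : ℕ) : ℤ) : ℤ) : ℝ) * (2*π) := by
    have hq : (((-((n / 6 : ℕ) : ℤ)) : ℤ) : ℝ) = -(((n/6 : ℕ) : ℕ) : ℝ) := by norm_cast
    rw [hv, hq, hnm]; ring
  rw [hd, rot_int]

private lemma hex_rot (p : ℝ × ℝ) : hexNorm (rot (π/3) p) = hexNorm p := by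
  obtain ⟨x, y⟩ := p
  have hs := hs3; have hp := hp3
  have hne : Real.sqrt 3 ≠ 0 := ne_of_gt hp
  unfold hexNorm rot
  rw [Real.cos_pi_div_three, Real.sin_pi_div_three]
  simp only
  have e1 : 2 * |Real.sqrt 3 / 2 * x + 1/2 * y| / Real.sqrt 3 = |x + y / Real.sqrt 3| := by
    rw [show Real.sqrt 3 / 2 * x + 1/2 * y = Real.sqrt 3 * (x + y / Real.sqrt 3) / 2 by
      field_simp <;> ring]
    rw [abs_div, abs_mul, abs_of_pos hp, abs_two]
    field_simp <;> ring
  have e2 : (1/2 * x - Real.sqrt 3 / 2 * y) + (Real.sqrt 3 / 2 * x + 1/2 * y) / Real.sqrt 3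
      = x - y / Real.sqrt 3 := by
    field_simp
    linear_combination (-y) * hs
  have e3 : (1/2 * x - Real.sqrt 3 / 2 * y) - (Real.sqrt 3 / 2 * x + 1/2 * y) / Real.sqrt 3
      = (-(2*y)) / Real.sqrt 3 := by
    field_simp
    linear_combination (-y) * hs
  rw [e1, e2, e3, abs_div, abs_neg, abs_of_pos hp, abs_mul, abs_two]
  rw [max_comm |x - y / Real.sqrt 3| (2*|y|/Real.sqrt 3), max_left_comm]

private lemma thex_rot (p : ℝ × ℝ) : thexNorm (rot (π/3) p) = thexNorm p := by
  obtain ⟨x, y⟩ := p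
  have hs := hs3
  unfold thexNorm rot
  rw [Real.cos_pi_div_three, Real.sin_pi_div_three]
  simp only
  have e2 : (1/2 * x - Real.sqrt 3 / 2 * y) + Real.sqrt 3 * (Real.sqrt 3 / 2 * x + 1/2 * y)
      = 2 * x := by linear_combination (x/2) * hs
  have e3 : (1/2 * x - Real.sqrt 3 / 2 * y) - Real.sqrt 3 * (Real.sqrt 3 / 2 * x + 1/2 * y)
      = -(x + Real.sqrt 3 * y) := by linear_combination (-x/2) * hs
  have e1 : (1/2 * x - Real.sqrt 3 / 2 * y) = (x - Real.sqrt 3 * y) / 2 := by ring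
  rw [e2, e3, e1, abs_neg, abs_div, abs_two, abs_mul, abs_two]
  rw [show 2*|x|/2 = |x| by ring]
  rw [max_left_comm, max_comm (|x - Real.sqrt 3 * y|/2)]

private lemma hex_rot_nat (n : ℕ) (p : ℝ × ℝ) :
    hexNorm (rot ((n:ℝ) * (π/3)) p) = hexNorm p := by
  induction n with
  | zero => norm_num [rot_zero']
  | succ n ih =>
      rw [show ((n+1 : ℕ):ℝ) * (π/3) = π/3 + (n:ℝ) * (π/3) by push_cast; ring,
        rot_add', hex_rot, ih]

private lemma thex_rot_nat (n : ℕ) (p : ℝ × ℝ) :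
    thexNorm (rot ((n:ℝ) * (π/3)) p) = thexNorm p := by
  induction n with
  | zero => norm_num [rot_zero']
  | succ n ih =>
      rw [show ((n+1 : ℕ):ℝ) * (π/3) = π/3 + (n:ℝ) * (π/3) by push_cast; ring,
        rot_add', thex_rot, ih]

private lemma rot_cancel (θ : ℝ) (p : ℝ × ℝ) : rot θ (rot (-θ) p) = p := by
  rw [← rot_add', add_neg_cancel, rot_zero']

private lemma hex_rot_neg (n : ℕ) (p : ℝ × ℝ) :
    hexNorm (rot (-((n:ℝ) * (π/3))) p) = hexNorm p := by
  conv_rhs => rw [← rot_cancel ((n:ℝ) * (π/3)) p, hex_rot_nat]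

private lemma thex_rot_neg (n : ℕ) (p : ℝ × ℝ) :
    thexNorm (rot (-((n:ℝ) * (π/3))) p) = thexNorm p := by
  conv_rhs => rw [← rot_cancel ((n:ℝ) * (π/3)) p, thex_rot_nat]

private lemma thex_neg (p : ℝ × ℝ) : thexNorm (-p) = thexNorm p := by
  obtain ⟨x, y⟩ := p
  unfold thexNorm
  simp only [Prod.fst_neg, Prod.snd_neg, Prod.neg_mk]
  rw [show -x + Real.sqrt 3 * -y = -(x + Real.sqrt 3 * y) by ring,
    show -x - Real.sqrt 3 * -y = -(x - Real.sqrt 3 * y) by ring,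
    abs_neg, abs_neg, abs_neg]

private lemma thex_wedge (U : ℝ × ℝ)
    (h : (U ∈ cone0 ∧ 0 ≤ U.1) ∨ (rot (-(π/3)) U ∈ cone0 ∧ (rot (-(π/3)) U).1 ≤ 0)) :
    thexNorm U = (U.1 - Real.sqrt 3 * U.2) / 2 := by
  obtain ⟨x, y⟩ := U
  have hs := hs3; have hp := hp3
  have hMeq : rot (-(π/3)) (x, y)
      = (x/2 + Real.sqrt 3 * y/2, -(Real.sqrt 3 * x)/2 + y/2) := by
    simp only [rot, Real.cos_neg, Real.sin_neg, Real.cos_pi_div_three, Real.sin_pi_div_three,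
      Prod.mk.injEq]
    constructor <;> ring
  rw [hMeq] at h
  simp only [cone0, Set.mem_setOf_eq] at h
  have key : 0 ≤ x ∧ x ≤ -(Real.sqrt 3 * y) ∧ Real.sqrt 3 * y ≤ 3 * x := by
    rcases h with ⟨⟨hy, habs⟩, hx⟩ | ⟨⟨hM2, habs⟩, hM1⟩
    · rw [abs_of_nonneg hx] at habs
      have F2 : 3 * x ≤ Real.sqrt 3 * (-y) := by
        have h' := mul_le_mul_of_nonneg_left habs hp.le
        calc 3 * x = Real.sqrt 3 * (Real.sqrt 3 * x) := by rw [← mul_assoc, hs]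
          _ ≤ Real.sqrt 3 * (-y) := h'
      refine ⟨hx, by linarith, by linarith⟩
    · rw [abs_of_nonpos hM1] at habs
      have e : Real.sqrt 3 * (-(x/2 + Real.sqrt 3 * y/2))
          = -(Real.sqrt 3 * x)/2 - 3*y/2 := by linear_combination (-y/2) * hs
      rw [e] at habs
      have P2 : -y ≤ Real.sqrt 3 * x := by linarith
      have P3 : Real.sqrt 3 * (-y) ≤ 3 * x := by
        have h' := mul_le_mul_of_nonneg_left P2 hp.le
        calc Real.sqrt 3 * (-y) ≤ Real.sqrt 3 * (Real.sqrt 3 * x) := h'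
          _ = 3 * x := by rw [← mul_assoc, hs]
      have hx : 0 ≤ x := by nlinarith [hM1, P3]
      refine ⟨hx, by linarith, by linarith⟩
  obtain ⟨hx, h1, h2⟩ := key
  have nonneg : 0 ≤ x - Real.sqrt 3 * y := by linarith
  have habs1 : |x| ≤ (x - Real.sqrt 3 * y)/2 := abs_le.2 ⟨by linarith, by linarith⟩
  have habs2 : |x + Real.sqrt 3 * y| ≤ x - Real.sqrt 3 * y := abs_le.2 ⟨by linarith, by linarith⟩
  unfold thexNorm
  simp only
  rw [abs_of_nonneg nonneg]
  rw [max_eq_right (by linarith : |x + Real.sqrt 3 * y|/2 ≤ (x - Real.sqrt 3 * y)/2)]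
  rw [max_eq_right habs1]

private lemma hex_bound (D : ℝ × ℝ) (hf : 0 ≤ D.2) (he : Real.sqrt 3 * D.1 ≤ D.2) :
    hexNorm D ≤ Real.sqrt 3 * D.2 - D.1 := by
  obtain ⟨e, f⟩ := D
  simp only at hf he
  have hs := hs3; have hp := hp3
  have he' : 3 * e ≤ Real.sqrt 3 * f := by
    have h' := mul_le_mul_of_nonneg_left he hp.le
    calc 3 * e = Real.sqrt 3 * (Real.sqrt 3 * e) := by rw [← mul_assoc, hs]
      _ ≤ Real.sqrt 3 * f := h'
  have hsf : 0 ≤ Real.sqrt 3 * f := mul_nonneg hp.le hf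
  have hdf : f / Real.sqrt 3 = Real.sqrt 3 * f / 3 := by
    rw [div_eq_div_iff hp.ne' (by norm_num : (3:ℝ) ≠ 0)]
    linear_combination (-f) * hs
  unfold hexNorm
  simp only
  rw [abs_of_nonneg hf, hdf]
  refine max_le ?_ (max_le ?_ ?_)
  · rw [div_le_iff₀ hp]
    have : (Real.sqrt 3 * f - e) * Real.sqrt 3 = 3 * f - Real.sqrt 3 * e := by
      linear_combination f * hs
    rw [this]; linarith
  · exact abs_le.2 ⟨by linarith, by linarith⟩
  · exact abs_le.2 ⟨by linarith, by linarith⟩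

private lemma cone_opp (D : ℝ × ℝ)
    (h : rot (-π) D ∈ cone0 ∨ rot (-(4*(π/3))) D ∈ cone0) :
    0 ≤ D.2 ∧ Real.sqrt 3 * D.1 ≤ D.2 := by
  obtain ⟨e, f⟩ := D
  dsimp only
  have hs := hs3; have hp := hp3
  have hA : rot (-π) (e, f) = (-e, -f) := by
    simp only [rot, Real.cos_neg, Real.sin_neg, Real.cos_pi, Real.sin_pi, Prod.mk.injEq]
    constructor <;> ring
  have hB : rot (-(4*(π/3))) (e, f) = (-e/2 - Real.sqrt 3 * f/2, Real.sqrt 3 * e/2 - f/2) := by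
    have hc : Real.cos (4*(π/3)) = -(1/2) := by
      rw [show (4:ℝ)*(π/3) = π + π/3 by ring, Real.cos_add, Real.cos_pi, Real.sin_pi,
        Real.cos_pi_div_three]
      ring
    have hsn : Real.sin (4*(π/3)) = -(Real.sqrt 3/2) := by
      rw [show (4:ℝ)*(π/3) = π + π/3 by ring, Real.sin_add, Real.cos_pi, Real.sin_pi,
        Real.sin_pi_div_three]
      ring
    simp only [rot, Real.cos_neg, Real.sin_neg, hc, hsn, Prod.mk.injEq]
    constructor <;> ring
  rcases h with h | h
  · rw [hA] at h
    simp only [cone0, Set.mem_setOf_eq] at h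
    obtain ⟨h1, h2⟩ := h
    rw [abs_neg] at h2
    have hf : 0 ≤ f := by linarith
    have h3 := mul_le_mul_of_nonneg_left (le_abs_self e) hp.le
    exact ⟨hf, by linarith⟩
  · rw [hB] at h
    simp only [cone0, Set.mem_setOf_eq] at h
    obtain ⟨h1, h2⟩ := h
    have hub := mul_le_mul_of_nonneg_left (le_abs_self (-e/2 - Real.sqrt 3 * f/2)) hp.le
    have e1 : Real.sqrt 3 * (-e/2 - Real.sqrt 3 * f/2)
        = -(Real.sqrt 3 * e)/2 - 3*f/2 := by linear_combination (-f/2) * hs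
    rw [e1] at hub
    constructor
    · linarith [hub, h2]
    · linarith
  done

end AuxStmt2

theorem stmt2 (u v t : ℝ × ℝ) (i : ZMod 6)
    (hu : u ∈ betweenBisectors t i) (hv : v ∈ betweenBisectors t i)
    (hvc : v ∈ cone u (i + 3) ∪ cone u (i + 4)) :
    hexNorm (v - u) ≤ 2 * (thexNorm (t - u) - thexNorm (t - v)) := by
  have hii : ((i.val : ℕ) : ZMod 6) = i := by simp [ZMod.natCast_val, ZMod.cast_id]
  set n : ℕ := i.val with hn
  set U : ℝ × ℝ := rot (-((n:ℝ) * (π/3))) (u - t) with hU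
  set V : ℝ × ℝ := rot (-((n:ℝ) * (π/3))) (v - t) with hV
  have h_u : localCoord t i u = U := localCoord_eq t u i n hii
  have h_v : localCoord t i v = V := localCoord_eq t v i n hii
  have h_u1 : localCoord t (i+1) u = rot (-(π/3)) U := by
    rw [localCoord_eq t u (i+1) (n+1) (by push_cast [hii]; ring), hU, ← rot_add']
    congr 1
    push_cast; ring
  have h_v1 : localCoord t (i+1) v = rot (-(π/3)) V := by
    rw [localCoord_eq t v (i+1) (n+1) (by push_cast [hii]; ring), hV, ← rot_add']
    congr 1
    push_cast; ring
  simp only [betweenBisectors, cone, Set.mem_setOf_eq, h_u, h_u1] at hu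
  simp only [betweenBisectors, cone, Set.mem_setOf_eq, h_v, h_v1] at hv
  have hD : rot (-((n:ℝ) * (π/3))) (v - u) = V - U := by
    rw [show v - u = (v - t) - (u - t) by abel, rot_sub']
  have h_u3 : localCoord u (i+3) v = rot (-π) (V - U) := by
    rw [localCoord_eq u v (i+3) (n+3) (by push_cast [hii]; ring), ← hD, ← rot_add']
    congr 1
    push_cast; ring
  have h_u4 : localCoord u (i+4) v = rot (-(4*(π/3))) (V - U) := by
    rw [localCoord_eq u v (i+4) (n+4) (by push_cast [hii]; ring), ← hD, ← rot_add']
    congr 1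
    push_cast; ring
  simp only [Set.mem_union, cone, Set.mem_setOf_eq, h_u3, h_u4] at hvc
  obtain ⟨hf, he⟩ := cone_opp (V - U) hvc
  have hTU : thexNorm (t - u) = (U.1 - Real.sqrt 3 * U.2) / 2 := by
    have h1 : rot (-((n:ℝ) * (π/3))) (t - u) = -U := by
      rw [hU, show t - u = -(u - t) by abel, rot_neg']
    calc thexNorm (t - u) = thexNorm (rot (-((n:ℝ) * (π/3))) (t - u)) := (thex_rot_neg n _).symm
      _ = thexNorm (-U) := by rw [h1]
      _ = thexNorm U := thex_neg U
      _ = (U.1 - Real.sqrt 3 * U.2) / 2 := thex_wedge U hu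
  have hTV : thexNorm (t - v) = (V.1 - Real.sqrt 3 * V.2) / 2 := by
    have h1 : rot (-((n:ℝ) * (π/3))) (t - v) = -V := by
      rw [hV, show t - v = -(v - t) by abel, rot_neg']
    calc thexNorm (t - v) = thexNorm (rot (-((n:ℝ) * (π/3))) (t - v)) := (thex_rot_neg n _).symm
      _ = thexNorm (-V) := by rw [h1]
      _ = thexNorm V := thex_neg V
      _ = (V.1 - Real.sqrt 3 * V.2) / 2 := thex_wedge V hv
  calc hexNorm (v - u) = hexNorm (rot (-((n:ℝ) * (π/3))) (v - u)) := (hex_rot_neg n _).symm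
    _ = hexNorm (V - U) := by rw [hD]
    _ ≤ Real.sqrt 3 * (V - U).2 - (V - U).1 := hex_bound (V - U) hf he
    _ = 2 * (thexNorm (t - u) - thexNorm (t - v)) := by
        rw [hTU, hTV, Prod.snd_sub, Prod.fst_sub]; ring
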